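/- Let φ be an orthonormal N-frame and η tangent at φ. Then for every t ∈ ℝ the polar-decomposition-based retraction R(φ, tη) := (φ+tη)·(I_N + t²⟦η,η⟧)^{-1/2} satisfies the second-order bound ‖R(φ, tη) − (φ+tη)‖_a ≤ t² · ‖φ+tη‖_a · ‖η‖_H². -/

import Mathlib

open scoped RealInnerProductSpace

/-- The outer product `⟦v,w⟧ ∈ ℝ^{N×N}` of two tuples, with entries `⟨v i, w j⟩`. -/
noncomputable def outerProd {N : ℕ} {H₀ : Type*} [NormedAddCommGroup H₀]
    [InnerProductSpace ℝ H₀] (v w : Fin N → H₀) : Matrix (Fin N) (Fin N) ℝ :=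
  Matrix.of fun i j => ⟪v i, w j⟫

/-- Multiplication of a tuple by a matrix from the right: `(vS)_j = Σ_i S_{ij} v_i`. -/
def smulMat {N : ℕ} {H₀ : Type*} [AddCommGroup H₀] [Module ℝ H₀]
    (v : Fin N → H₀) (S : Matrix (Fin N) (Fin N) ℝ) : Fin N → H₀ :=
  fun j => ∑ i, S i j • v i

/-- The inner product `(v,w)_H = Σ_j ⟨v_j, w_j⟩ = tr⟦v,w⟧`. -/
noncomputable def innerH {N : ℕ} {H₀ : Type*} [NormedAddCommGroup H₀]
    [InnerProductSpace ℝ H₀] (v w : Fin N → H₀) : ℝ :=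
  ∑ j, ⟪v j, w j⟫

/-- The `H`-norm `‖v‖_H = (Σ_j ⟨v_j, v_j⟩_H)^{1/2}` of a tuple. -/
noncomputable def normH {N : ℕ} {H₀ : Type*} [NormedAddCommGroup H₀]
    [InnerProductSpace ℝ H₀] (v : Fin N → H₀) : ℝ :=
  Real.sqrt (innerH v v)

/-- The `a`-norm `‖v‖_a = (Σ_j ã(v_j, v_j))^{1/2}` of a tuple, for a second inner
product `ã` on the underlying space. -/
noncomputable def normA {N : ℕ} {V : Type*} [AddCommGroup V] [Module ℝ V]
    (aForm : V →ₗ[ℝ] V →ₗ[ℝ] ℝ) (v : Fin N → V) : ℝ :=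
  Real.sqrt (∑ j, aForm (v j) (v j))

lemma aForm_nonneg {V : Type*} [AddCommGroup V] [Module ℝ V]
    (aForm : V →ₗ[ℝ] V →ₗ[ℝ] ℝ)
    (hpos : ∀ u : V, u ≠ 0 → 0 < aForm u u) (u : V) : 0 ≤ aForm u u := by
  by_cases h : u = 0
  · simp [h]
  · exact (hpos u h).le

lemma aForm_cs {V : Type*} [AddCommGroup V] [Module ℝ V]
    (aForm : V →ₗ[ℝ] V →ₗ[ℝ] ℝ)
    (hsymm : ∀ u w : V, aForm u w = aForm w u)
    (hpos : ∀ u : V, u ≠ 0 → 0 < aForm u u) (u w : V) :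
    (aForm u w) ^ 2 ≤ aForm u u * aForm w w := by
  have key : ∀ x : ℝ, 0 ≤ (aForm w w) * (x * x) + (2 * aForm u w) * x + aForm u u := by
    intro x
    have h0 := aForm_nonneg aForm hpos (u + x • w)
    have : aForm (u + x • w) (u + x • w)
        = (aForm w w) * (x * x) + (2 * aForm u w) * x + aForm u u := by
      simp [map_add, map_smul, hsymm w u]
      ring
    linarith [h0, this ▸ h0]
  have := discrim_le_zero key
  rw [discrim] at this
  nlinarith [this]

lemma sum_smul_aForm_le {N : ℕ} {V : Type*} [AddCommGroup V] [Module ℝ V]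
    (aForm : V →ₗ[ℝ] V →ₗ[ℝ] ℝ)
    (hsymm : ∀ u w : V, aForm u w = aForm w u)
    (hpos : ∀ u : V, u ≠ 0 → 0 < aForm u u) (y : Fin N → ℝ) (v : Fin N → V) :
    aForm (∑ i, y i • v i) (∑ i, y i • v i) ≤
      (∑ i, (y i) ^ 2) * (∑ i, aForm (v i) (v i)) := by
  have expand : aForm (∑ i, y i • v i) (∑ i, y i • v i)
      = ∑ i, ∑ j, y i * y j * aForm (v i) (v j) := by
    rw [map_sum]
    simp only [LinearMap.coe_sum, Finset.sum_apply, map_sum, map_smul, LinearMap.smul_apply,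
      smul_eq_mul]
    rw [Finset.sum_comm]
    apply Finset.sum_congr rfl; intro i _
    rw [Finset.mul_sum]
    apply Finset.sum_congr rfl; intro j _
    ring
  rw [expand]
  have step1 : ∑ i, ∑ j, y i * y j * aForm (v i) (v j) ≤
      (∑ i, |y i| * Real.sqrt (aForm (v i) (v i))) ^ 2 := by
    rw [sq, Finset.sum_mul_sum]
    apply Finset.sum_le_sum; intro i _
    apply Finset.sum_le_sum; intro j _
    have h1 : |aForm (v i) (v j)| ≤
        Real.sqrt (aForm (v i) (v i)) * Real.sqrt (aForm (v j) (v j)) := by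
      rw [← Real.sqrt_mul (aForm_nonneg aForm hpos _)]
      rw [← Real.sqrt_sq_eq_abs]
      exact Real.sqrt_le_sqrt (aForm_cs aForm hsymm hpos _ _)
    calc y i * y j * aForm (v i) (v j) ≤ |y i * y j * aForm (v i) (v j)| := le_abs_self _
      _ = |y i| * |y j| * |aForm (v i) (v j)| := by rw [abs_mul, abs_mul]
      _ ≤ |y i| * |y j| * (Real.sqrt (aForm (v i) (v i)) * Real.sqrt (aForm (v j) (v j))) := by
          apply mul_le_mul_of_nonneg_left h1 (by positivity)
      _ = |y i| * Real.sqrt (aForm (v i) (v i)) * (|y j| * Real.sqrt (aForm (v j) (v j))) := by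
          ring
  refine step1.trans ?_
  calc (∑ i, |y i| * Real.sqrt (aForm (v i) (v i))) ^ 2
      ≤ (∑ i, |y i| ^ 2) * (∑ i, Real.sqrt (aForm (v i) (v i)) ^ 2) :=
        Finset.sum_mul_sq_le_sq_mul_sq Finset.univ _ _
    _ = (∑ i, (y i) ^ 2) * (∑ i, aForm (v i) (v i)) := by
        congr 1
        · simp [sq_abs]
        · apply Finset.sum_congr rfl; intro i _
          exact Real.sq_sqrt (aForm_nonneg aForm hpos _)

set_option maxHeartbeats 1000000

/-- second-order boundedness of the polar-decomposition-based retraction: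
`‖R(φ,tη) − (φ+tη)‖_a ≤ t² ‖φ+tη‖_a ‖η‖_H²`. The square root `(I + t²⟦η,η⟧)^{1/2}` is
represented, for each `t`, by the (unique) symmetric positive semidefinite matrix `Sq t`
with `Sq t * Sq t = I + t²⟦η,η⟧`. -/
theorem polar_retraction_second_order_bound {N : ℕ} (hN : 1 ≤ N) {V : Type*}
    [NormedAddCommGroup V] [InnerProductSpace ℝ V]
    (aForm : V →ₗ[ℝ] V →ₗ[ℝ] ℝ)
    (hsymm : ∀ u w : V, aForm u w = aForm w u)
    (hpos : ∀ u : V, u ≠ 0 → 0 < aForm u u)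
    (φ η : Fin N → V) (hφ : outerProd φ φ = 1)
    (hη : outerProd η φ + outerProd φ η = 0)
    (Sq : ℝ → Matrix (Fin N) (Fin N) ℝ)
    (hSq : ∀ t : ℝ, (Sq t).PosSemidef ∧ Sq t * Sq t = 1 + (t ^ 2) • outerProd η η) :
    ∀ t : ℝ,
      normA aForm (smulMat (φ + t • η) (Sq t)⁻¹ - (φ + t • η)) ≤
        t ^ 2 * normA aForm (φ + t • η) * (normH η) ^ 2 := by
  intro t
  obtain ⟨hP, hSS⟩ := hSq t
  set w : Fin N → V := φ + t • η with hw
  set S := Sq t with hSdef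
  set B := outerProd η η with hBdef
  -- B is positive semidefinite
  have hB : B.PosSemidef := by
    refine Matrix.PosSemidef.of_dotProduct_mulVec_nonneg ?_ ?_
    · ext i j
      simp [hBdef, outerProd, Matrix.conjTranspose_apply, real_inner_comm]
    · intro x
      have hxB : dotProduct (star x) (Matrix.mulVec B x)
          = ⟪∑ i, x i • η i, ∑ i, x i • η i⟫ := by
        rw [sum_inner]
        simp only [inner_sum, real_inner_smul_left, real_inner_smul_right]
        simp only [dotProduct, Matrix.mulVec, star_trivial, hBdef, outerProd,
          Matrix.of_apply, Finset.mul_sum]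
        apply Finset.sum_congr rfl; intro i _
        apply Finset.sum_congr rfl; intro j _
        ring
      rw [hxB]
      exact real_inner_self_nonneg
  -- spectral data of S
  have hH : S.IsHermitian := hP.1
  set U : Matrix (Fin N) (Fin N) ℝ := (hH.eigenvectorUnitary : Matrix (Fin N) (Fin N) ℝ) with hUdef
  set μ : Fin N → ℝ := hH.eigenvalues with hμdef
  have hU1 : star U * U = 1 := Unitary.coe_star_mul_self hH.eigenvectorUnitary
  have hU2 : U * star U = 1 := Unitary.coe_mul_star_self hH.eigenvectorUnitary
  have hdiag : star U * S * U = Matrix.diagonal μ := by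
    have h := hH.conjStarAlgAut_star_eigenvectorUnitary
    simpa [hUdef, Unitary.conjStarAlgAut_apply, Unitary.coe_star, RCLike.ofReal_real_eq_id, Function.id_comp] using h
  have hspec : S = U * Matrix.diagonal μ * star U := by
    rw [← hdiag]
    simp only [← mul_assoc]
    rw [hU2, one_mul, mul_assoc, hU2, mul_one]
  -- D² = 1 + t² C with C = U* B U
  set C := star U * B * U with hCdef
  have hDD : Matrix.diagonal μ * Matrix.diagonal μ = 1 + t ^ 2 • C := by
    have h1 : (star U * S * U) * (star U * S * U) = star U * (S * S) * U := by
      calc (star U * S * U) * (star U * S * U)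
          = star U * S * ((U * star U) * (S * U)) := by simp only [mul_assoc]
        _ = star U * (S * S) * U := by rw [hU2, one_mul]; simp only [mul_assoc]
    rw [hdiag] at h1
    rw [h1, hSS]
    rw [Matrix.mul_add, Matrix.add_mul, Matrix.mul_one, hU1]
    congr 1
    rw [Matrix.mul_smul, Matrix.smul_mul]
  have hC : C.PosSemidef := by
    have := hB.conjTranspose_mul_mul_same U
    simpa [hCdef, Matrix.star_eq_conjTranspose] using this
  have hCd : ∀ i, 0 ≤ C i i := by
    intro i
    exact hC.diag_nonneg
  have hμsq : ∀ i, μ i * μ i = 1 + t ^ 2 * C i i := by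
    intro i
    have h := congrArg (fun M => M i i) hDD
    simpa [Matrix.diagonal_mul_diagonal, Matrix.diagonal_apply_eq, Matrix.add_apply,
      Matrix.smul_apply, Matrix.one_apply_eq, smul_eq_mul] using h
  have hμ1 : ∀ i, 1 ≤ μ i := by
    intro i
    have h0 : 0 ≤ μ i := hP.eigenvalues_nonneg i
    have h1 := hμsq i
    nlinarith [hCd i, sq_nonneg t, mul_nonneg (sq_nonneg t) (hCd i)]
  have hμ0 : ∀ i, μ i ≠ 0 := fun i => by have := hμ1 i; positivity
  -- trace identity
  have htrB0 : 0 ≤ innerH η η :=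
    Finset.sum_nonneg fun j _ => real_inner_self_nonneg
  have htr : ∑ i, (μ i ^ 2 - 1) = t ^ 2 * innerH η η := by
    have h2 : Matrix.trace C = Matrix.trace B := by
      rw [hCdef, Matrix.trace_mul_comm, ← mul_assoc, hU2, one_mul]
    have h3 : Matrix.trace B = innerH η η := by
      simp [hBdef, outerProd, innerH, Matrix.trace, Matrix.diag]
    have h4 := congrArg Matrix.trace hDD
    rw [Matrix.trace_add, Matrix.trace_smul, h2, h3, Matrix.trace_one,
      Matrix.diagonal_mul_diagonal, Matrix.trace_diagonal] at h4
    have h5 : ∑ i, (μ i ^ 2 - 1) = (∑ i, μ i * μ i) - (N : ℝ) := by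
      rw [Finset.sum_sub_distrib]
      simp [sq]
    rw [h5, h4]
    simp [smul_eq_mul]
  -- explicit inverse of S
  set E := Matrix.diagonal (fun i => (μ i)⁻¹) with hEdef
  have hDE : Matrix.diagonal μ * E = 1 := by
    rw [hEdef, Matrix.diagonal_mul_diagonal]
    have : (fun i => μ i * (μ i)⁻¹) = fun _ => (1 : ℝ) :=
      funext fun i => mul_inv_cancel₀ (hμ0 i)
    rw [this, Matrix.diagonal_one]
  have hSinv : S⁻¹ = U * E * star U := by
    apply Matrix.inv_eq_right_inv
    rw [hspec]
    calc (U * Matrix.diagonal μ * star U) * (U * E * star U)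
        = U * Matrix.diagonal μ * ((star U * U) * (E * star U)) := by simp only [mul_assoc]
      _ = U * ((Matrix.diagonal μ * E) * star U) := by rw [hU1, one_mul]; simp only [mul_assoc]
      _ = U * star U := by rw [hDE, one_mul]
      _ = 1 := hU2
  set G := Matrix.diagonal (fun i => (μ i)⁻¹ - 1) with hGdef
  have hEG : E - 1 = G := by
    ext i j
    by_cases h : i = j <;> simp [hEdef, hGdef, Matrix.diagonal_apply, Matrix.one_apply, h]
  have hM : S⁻¹ - 1 = U * G * star U := by
    rw [hSinv, ← hU2]
    calc U * E * star U - U * star U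
        = U * (E * star U) - U * (1 * star U) := by simp only [mul_assoc, one_mul]
      _ = U * ((E - 1) * star U) := by rw [← Matrix.mul_sub, ← Matrix.sub_mul]
      _ = U * G * star U := by rw [hEG, mul_assoc]
  -- Frobenius norm squared of S⁻¹ - 1
  have e2 : Matrix.trace (star (S⁻¹ - 1) * (S⁻¹ - 1)) = ∑ i, ((μ i)⁻¹ - 1) ^ 2 := by
    rw [hM]
    have hGG : star G = G := by
      rw [hGdef, Matrix.star_eq_conjTranspose, Matrix.diagonal_conjTranspose]
      simp
    have hGstar : star (U * G * star U) = U * G * star U := by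
      rw [star_mul, star_mul, star_star, hGG, mul_assoc]
    rw [hGstar]
    have h1 : (U * G * star U) * (U * G * star U) = U * (G * G) * star U := by
      calc (U * G * star U) * (U * G * star U)
          = U * G * ((star U * U) * (G * star U)) := by simp only [mul_assoc]
        _ = U * (G * G) * star U := by rw [hU1, one_mul]; simp only [mul_assoc]
    rw [h1, Matrix.trace_mul_comm, ← mul_assoc, ← mul_assoc, hU1, one_mul,
      Matrix.diagonal_mul_diagonal, Matrix.trace_diagonal]
    simp [sq]
  have e1 : Matrix.trace (star (S⁻¹ - 1) * (S⁻¹ - 1)) = ∑ j, ∑ i, ((S⁻¹ - 1) i j) ^ 2 := by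
    simp only [Matrix.trace, Matrix.diag, Matrix.mul_apply, Matrix.star_apply, star_trivial, sq]
  -- scalar bound on eigenvalues
  have hTb : ∑ i, ((μ i)⁻¹ - 1) ^ 2 ≤ (t ^ 2 * innerH η η) ^ 2 := by
    rw [← htr]
    calc ∑ i, ((μ i)⁻¹ - 1) ^ 2 ≤ ∑ i, (μ i ^ 2 - 1) ^ 2 := by
          apply Finset.sum_le_sum; intro i _
          have ha := hμ1 i
          have hinv : μ i * (μ i)⁻¹ = 1 := mul_inv_cancel₀ (hμ0 i)
          have hb0 : 0 ≤ (μ i)⁻¹ := by positivity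
          nlinarith [mul_nonneg (sq_nonneg (μ i - 1)) hb0, sq_nonneg (μ i - 1),
            sq_nonneg (μ i + 1)]
      _ ≤ (∑ i, (μ i ^ 2 - 1)) ^ 2 := by
          apply Finset.sum_sq_le_sq_sum_of_nonneg
          intro i _
          nlinarith [hμ1 i]
  -- the difference tuple
  have htuple : smulMat w S⁻¹ - w = fun j => ∑ i, (S⁻¹ - 1) i j • w i := by
    funext j
    have : ∑ i, (S⁻¹ - 1) i j • w i
        = (∑ i, S⁻¹ i j • w i) - ∑ i, (1 : Matrix (Fin N) (Fin N) ℝ) i j • w i := by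
      rw [← Finset.sum_sub_distrib]
      apply Finset.sum_congr rfl; intro i _
      rw [Matrix.sub_apply, sub_smul]
    rw [Pi.sub_apply, this]
    congr 1
    simp [Matrix.one_apply, ite_smul, Finset.sum_ite_eq]
  -- assemble
  set K := ∑ j, aForm (w j) (w j) with hKdef
  have hK0 : 0 ≤ K := Finset.sum_nonneg fun j _ => aForm_nonneg aForm hpos _
  have hsum : ∑ j, aForm ((smulMat w S⁻¹ - w) j) ((smulMat w S⁻¹ - w) j)
      ≤ (t ^ 2 * innerH η η) ^ 2 * K := by
    rw [htuple]
    calc ∑ j, aForm (∑ i, (S⁻¹ - 1) i j • w i) (∑ i, (S⁻¹ - 1) i j • w i)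
        ≤ ∑ j, (∑ i, ((S⁻¹ - 1) i j) ^ 2) * K := by
          apply Finset.sum_le_sum; intro j _
          exact sum_smul_aForm_le aForm hsymm hpos _ _
      _ = (∑ j, ∑ i, ((S⁻¹ - 1) i j) ^ 2) * K := by rw [Finset.sum_mul]
      _ ≤ (t ^ 2 * innerH η η) ^ 2 * K := by
          apply mul_le_mul_of_nonneg_right _ hK0
          rw [← e1, e2]
          exact hTb
  have hfin : normA aForm (smulMat w S⁻¹ - w) ≤ (t ^ 2 * innerH η η) * Real.sqrt K := by
    rw [normA]
    calc Real.sqrt (∑ j, aForm ((smulMat w S⁻¹ - w) j) ((smulMat w S⁻¹ - w) j))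
        ≤ Real.sqrt ((t ^ 2 * innerH η η) ^ 2 * K) := Real.sqrt_le_sqrt hsum
      _ = (t ^ 2 * innerH η η) * Real.sqrt K := by
          rw [Real.sqrt_mul (sq_nonneg _), Real.sqrt_sq (by positivity)]
  calc normA aForm (smulMat w S⁻¹ - w) ≤ (t ^ 2 * innerH η η) * Real.sqrt K := hfin
    _ = t ^ 2 * normA aForm w * normH η ^ 2 := by
        rw [normA, normH, Real.sq_sqrt htrB0, ← hKdef]
        ring
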